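/- arXiv:2603.14970 — 4 statements merged into one kernel-verified Lean document; each statement's English description precedes it below -/
import Mathlib

section
/- Let f : (X, x₀) → (Y, y₀) be a functor of pointed groupoids with homotopy fibre (F, x̃₀) at y₀. Then the sequence of pointed sets π₁(X, x₀) → π₁(Y, y₀) → π₀(F) → π₀(X) → π₀(Y) is exact, where the connecting map ∂ : π₁(Y, y₀) → π₀(F) sends an automorphism φ : y₀ ≅ y₀ to the class of (x₀, φ), the map π₀(F) → π₀(X) sends [(x, φ)] to [x], and exactness at a pointed set means the preimage of the basepoint class equals the image of the previous map. -/
/-!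
STATEMENT 1: For a functor of pointed groupoids `f : (X, x₀) → (Y, y₀)` with homotopy
fibre `(F, x̃₀)` at `y₀`, the sequence of pointed sets
`π₁(X, x₀) → π₁(Y, y₀) → π₀(F) → π₀(X) → π₀(Y)` is exact.
-/

open CategoryTheory

universe u₁ v₁ u₂ v₂

/-- The homotopy fibre of a functor of groupoids `f : X ⥤ Y` over a point `y₀ : Y`. -/
structure HomotopyFiber {X : Type u₁} {Y : Type u₂} [Groupoid.{v₁} X] [Groupoid.{v₂} Y]
    (f : X ⥤ Y) (y₀ : Y) where
  pt : X
  iso : y₀ ≅ f.obj pt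

namespace HomotopyFiber

variable {X : Type u₁} {Y : Type u₂} [Groupoid.{v₁} X] [Groupoid.{v₂} Y]
  (f : X ⥤ Y) (y₀ : Y)

instance : Category (HomotopyFiber f y₀) where
  Hom A B := { u : A.pt ⟶ B.pt // A.iso.hom ≫ f.map u = B.iso.hom }
  id A := ⟨𝟙 A.pt, by simp⟩
  comp u v := ⟨u.1 ≫ v.1, by rw [f.map_comp, ← Category.assoc, u.2, v.2]⟩
  id_comp := by intros; apply Subtype.ext; simp
  comp_id := by intros; apply Subtype.ext; simp
  assoc := by intros; apply Subtype.ext; simp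

/-- The canonical projection from the homotopy fibre to `X`. -/
def proj : HomotopyFiber f y₀ ⥤ X where
  obj A := A.pt
  map u := u.1

/-- The canonical basepoint `x̃₀ = (x₀, id_{y₀})`. -/
def base (x₀ : X) (h : f.obj x₀ = y₀) : HomotopyFiber f y₀ := ⟨x₀, eqToIso h.symm⟩

end HomotopyFiber

/-- `π₀` of a category: its set of isomorphism classes of objects. -/
def pi0 (C : Type u₁) [Category.{v₁} C] : Type u₁ := Quotient (isIsomorphicSetoid C)

/-- The class of an object in `π₀`. -/
def pi0.mk {C : Type u₁} [Category.{v₁} C] (x : C) : pi0 C :=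
  Quotient.mk (isIsomorphicSetoid C) x

/-- The map induced on `π₀` by a functor. -/
def pi0Map {C : Type u₁} {D : Type u₂} [Category.{v₁} C] [Category.{v₂} D] (f : C ⥤ D) :
    pi0 C → pi0 D :=
  Quot.map f.obj fun _ _ e => e.elim fun i => ⟨f.mapIso i⟩


section Helpers

open CategoryTheory

variable {X : Type u₁} {Y : Type u₂} [Groupoid.{v₁} X] [Groupoid.{v₂} Y]
  (f : X ⥤ Y) (y₀ : Y)

lemma pi0_mk_eq_iff {C : Type u₁} [Category.{v₁} C] (a b : C) :
    pi0.mk a = pi0.mk b ↔ Nonempty (a ≅ b) := by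
  constructor
  · intro h; exact Quotient.exact h
  · intro h; exact Quotient.sound h

/-- Build an iso in the homotopy fibre from a morphism. -/
def HomotopyFiber.isoMk {A B : HomotopyFiber f y₀} (u : A.pt ⟶ B.pt)
    (hu : A.iso.hom ≫ f.map u = B.iso.hom) : A ≅ B where
  hom := ⟨u, hu⟩
  inv := ⟨Groupoid.inv u, by
    rw [← hu]; simp⟩
  hom_inv_id := Subtype.ext (show u ≫ Groupoid.inv u = 𝟙 _ by simp)
  inv_hom_id := Subtype.ext (show Groupoid.inv u ≫ u = 𝟙 _ by simp)

end Helpers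

/-- Exactness of `π₁(X, x₀) → π₁(Y, y₀) → π₀(F) → π₀(X) → π₀(Y)` at the three middle
terms, where the connecting map `∂` sends `ψ : y₀ ≅ y₀` to the class of `(x₀, ψ)`. -/
theorem stmt1 {X : Type u₁} {Y : Type u₂} [Groupoid.{v₁} X] [Groupoid.{v₂} Y]
    (f : X ⥤ Y) (x₀ : X) (y₀ : Y) (h : f.obj x₀ = y₀) :
    -- exactness at π₁(Y, y₀)
    (∀ ψ : Aut y₀,
      pi0.mk (⟨x₀, (ψ : y₀ ≅ y₀) ≪≫ eqToIso h.symm⟩ : HomotopyFiber f y₀) =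
          pi0.mk (HomotopyFiber.base f y₀ x₀ h) ↔
        ∃ u : Aut x₀, (eqToIso h).symm ≪≫ f.mapIso (u : x₀ ≅ x₀) ≪≫ eqToIso h = ψ) ∧
    -- exactness at π₀(F)
    (∀ a : pi0 (HomotopyFiber f y₀),
      pi0Map (HomotopyFiber.proj f y₀) a = pi0.mk x₀ ↔
        ∃ ψ : Aut y₀,
          pi0.mk (⟨x₀, (ψ : y₀ ≅ y₀) ≪≫ eqToIso h.symm⟩ : HomotopyFiber f y₀) = a) ∧
    -- exactness at π₀(X)
    (∀ b : pi0 X, pi0Map f b = pi0.mk y₀ ↔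
        ∃ a : pi0 (HomotopyFiber f y₀), pi0Map (HomotopyFiber.proj f y₀) a = b) := by
  refine ⟨?_, ?_, ?_⟩
  · intro (ψ : y₀ ≅ y₀)
    rw [pi0_mk_eq_iff]
    constructor
    · rintro ⟨e⟩
      obtain ⟨u, hu⟩ := e.hom
      refine ⟨(Groupoid.isoEquivHom _ _).symm u |>.symm, ?_⟩
      ext
      simp only [HomotopyFiber.base, Iso.trans_hom, eqToIso.hom, Category.assoc] at hu ⊢
      simp only [Groupoid.isoEquivHom, Equiv.coe_fn_symm_mk, Iso.symm_hom, Functor.mapIso_inv,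
        Iso.symm_inv, eqToIso.inv]
      rw [← hu]
      simp
      show _ ≫ _ ≫ f.map u ≫ f.map (inv u) ≫ _ = _
      simp
    · rintro ⟨(u : x₀ ≅ x₀), hu⟩
      refine ⟨HomotopyFiber.isoMk f y₀ (Groupoid.inv u.hom) ?_⟩
      have : ψ.hom = eqToHom h.symm ≫ f.map u.hom ≫ eqToHom h := by
        rw [← hu]; simp
      simp [HomotopyFiber.base, this]
  · intro a
    induction a using Quotient.inductionOn with
    | h A =>
      obtain ⟨x, φ⟩ := A
      constructor
      · intro hp
        obtain ⟨i⟩ := Quotient.exact hp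
        refine ⟨φ ≪≫ f.mapIso (i : x ≅ x₀) ≪≫ eqToIso h, Quotient.sound ⟨?_⟩⟩
        exact HomotopyFiber.isoMk f y₀ i.inv (by simp; erw [← f.map_comp, i.hom_inv_id, f.map_id, Category.comp_id])
      · rintro ⟨ψ, hψ⟩
        obtain ⟨e⟩ := Quotient.exact hψ
        exact Quotient.sound ⟨((HomotopyFiber.proj f y₀).mapIso e).symm⟩
  · intro b
    induction b using Quotient.inductionOn with
    | h x =>
      constructor
      · intro hp
        obtain ⟨j⟩ := Quotient.exact hp
        exact ⟨pi0.mk (⟨x, j.symm⟩ : HomotopyFiber f y₀), rfl⟩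
      · rintro ⟨a, ha⟩
        induction a using Quotient.inductionOn with
        | h A =>
          obtain ⟨x', φ⟩ := A
          obtain ⟨k⟩ := Quotient.exact ha
          exact Quotient.sound ⟨f.mapIso k.symm ≪≫ φ.symm⟩
end

section
/- Let T be a triangulated category with shift Σ and let (T_{≥0}, T_{≤0}) be a t-structure on T with heart H and homological functors π_n : T → H (n ∈ ℤ). Suppose Q is an object of T_{≤0} such that Hom_T(X, Σ Q) = 0 for all X ∈ T_{≤0} (a t-injective object), and suppose the t-structure is non-degenerate. If E is t-injective and π₀(E) is an injective cogenerator of H (i.e., Hom_H(A, π₀(E)) = 0 implies A ≅ 0), then for every object X and integer n one has Hom_T(X, Σⁿ E) = 0 if and only if πₙ(X) ≅ 0. -/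
open CategoryTheory Limits Pretriangulated

universe u v w

variable (C : Type u) [Category.{v} C] [Preadditive C] [HasZeroObject C] [HasShift C ℤ]
  [∀ n : ℤ, (shiftFunctor C n).Additive] [Pretriangulated C]

/-- A t-structure on a (pre)triangulated category `C`, in homological notation:
`ge n X` means `X ∈ C_{≥ n}` and `le n X` means `X ∈ C_{≤ n}`. -/
structure HomTStructure where
  ge : ℤ → C → Prop
  le : ℤ → C → Prop
  ge_iso : ∀ (n : ℤ) {X Y : C}, (X ≅ Y) → ge n X → ge n Y
  le_iso : ∀ (n : ℤ) {X Y : C}, (X ≅ Y) → le n X → le n Y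
  ge_shift : ∀ (n k : ℤ) (X : C), ge n X → ge (n + k) (X⟦k⟧)
  le_shift : ∀ (n k : ℤ) (X : C), le n X → le (n + k) (X⟦k⟧)
  ge_mono : ∀ (m n : ℤ), m ≤ n → ∀ X : C, ge n X → ge m X
  le_mono : ∀ (m n : ℤ), n ≤ m → ∀ X : C, le n X → le m X
  hom_zero : ∀ {X Y : C}, ge 0 X → le (-1) Y → ∀ f : X ⟶ Y, f = 0
  trunc : ∀ X : C, ∃ (A B : C) (f : A ⟶ X) (g : X ⟶ B) (h : B ⟶ A⟦(1 : ℤ)⟧),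
    ge 0 A ∧ le (-1) B ∧ Triangle.mk f g h ∈ distTriang C

variable {C}

/-- Data exhibiting the heart `H` of a t-structure (embedded via `ι`, with essential
image `C_{≥0} ∩ C_{≤0}`) together with the homological functors `πₙ : C ⥤ H`
(`πₙ = π₀ ∘ Σ⁻ⁿ`), where `π₀ = τ_{≥0} τ_{≤0}` is characterized by the usual partial
adjunction properties on the aisle and the coaisle and by compatibility with the
coaisle truncation `τ = τ_{≤0}`. -/
structure HomologyData (t : HomTStructure C) (H : Type w) [Category.{v} H] [Abelian H] where
  ι : H ⥤ C
  ιFull : ι.Full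
  ιFaithful : ι.Faithful
  essImage : ∀ X : C, (∃ A : H, Nonempty (ι.obj A ≅ X)) ↔ (t.ge 0 X ∧ t.le 0 X)
  π : ℤ → C ⥤ H
  πAdditive : ∀ n : ℤ, (π n).Additive
  πShift : ∀ n : ℤ, π n ≅ shiftFunctor C (-n) ⋙ π 0
  πHeart : ∀ A : H, (π 0).obj (ι.obj A) ≅ A
  adj_ge : ∀ X : C, t.ge 0 X → ∀ A : H,
    Function.Bijective (fun f : X ⟶ ι.obj A => (π 0).map f ≫ (πHeart A).hom)
  adj_le : ∀ X : C, t.le 0 X → ∀ A : H,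
    Function.Bijective (fun f : ι.obj A ⟶ X => (πHeart A).inv ≫ (π 0).map f)
  τ : C ⥤ C
  η : 𝟭 C ⟶ τ
  τ_le : ∀ X : C, t.le 0 (τ.obj X)
  τ_adj : ∀ (X Y : C), t.le 0 Y →
    Function.Bijective (fun g : τ.obj X ⟶ Y => η.app X ≫ g)
  π_η : ∀ X : C, IsIso ((π 0).map (η.app X))

section Aux

lemma forall_zero_iff_subsingleton {α : Type*} [Zero α] :
    (∀ x : α, x = 0) ↔ Subsingleton α :=
  ⟨fun h => ⟨fun a b => (h a).trans (h b).symm⟩, fun h x => @Subsingleton.elim _ h x 0⟩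

variable {C : Type u} [Category.{v} C] [Preadditive C] [HasZeroObject C] [HasShift C ℤ]
  [∀ n : ℤ, (shiftFunctor C n).Additive] [Pretriangulated C]

namespace HomTStructure

variable (t : HomTStructure C)

lemma ge_shift' (n k m : ℤ) (h : n + k = m) (X : C) (hX : t.ge n X) : t.ge m (X⟦k⟧) :=
  h ▸ t.ge_shift n k X hX

lemma le_shift' (n k m : ℤ) (h : n + k = m) (X : C) (hX : t.le n X) : t.le m (X⟦k⟧) :=
  h ▸ t.le_shift n k X hX

lemma hom_zero' {X Y : C} (a b : ℤ) (hX : t.ge a X) (hY : t.le b Y) (hab : b < a)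
    (f : X ⟶ Y) : f = 0 := by
  apply (shiftFunctor C (-1 - b)).map_injective
  rw [Functor.map_zero]
  exact t.hom_zero
    (t.ge_mono 0 (a + (-1 - b)) (by omega) _ (t.ge_shift a (-1 - b) X hX))
    (t.le_shift' b (-1 - b) (-1) (by omega) Y hY) _

/-- An object receiving no nonzero maps from `C_{≥1}` lies in `C_{≤0}`. -/
lemma le_of_orth (A : C) (h : ∀ W : C, t.ge 1 W → ∀ u : W ⟶ A, u = 0) : t.le 0 A := by
  obtain ⟨A', B', f', g', h', hA', hB', hT⟩ := t.trunc (A⟦(-1 : ℤ)⟧)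
  -- the map `f' : A' ⟶ A⟦-1⟧` vanishes
  have hf' : f' = 0 := by
    apply (shiftFunctor C (1 : ℤ)).map_injective
    rw [Functor.map_zero, ← cancel_mono (shiftNegShift A (1 : ℤ)).hom, zero_comp]
    exact h _ (t.ge_shift' 0 1 1 (by omega) A' hA') _
  -- hence `A'` is zero
  have hT' := inv_rot_of_distTriang _ hT
  obtain ⟨w, hw⟩ := Triangle.coyoneda_exact₂ _ hT' (𝟙 A')
    (by show 𝟙 A' ≫ f' = 0; rw [hf', comp_zero])
  have hw0 : w = 0 :=
    t.hom_zero' 0 (-2) hA' (t.le_shift' (-1) (-1) (-2) (by omega) B' hB') (by omega) w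
  have hzero : IsZero A' := (IsZero.iff_id_eq_zero A').2 (by rw [hw, hw0]; exact zero_comp)
  -- hence `g'` is an isomorphism
  have : IsIso (Triangle.mk f' g' h').mor₂ :=
    (Triangle.isZero₁_iff_isIso₂ _ hT).1 hzero
  have hle : t.le (-1) (A⟦(-1 : ℤ)⟧) :=
    t.le_iso (-1) (asIso (Triangle.mk f' g' h').mor₂).symm hB'
  exact t.le_iso 0 (shiftNegShift A (1 : ℤ)) (t.le_shift' (-1) 1 0 (by omega) _ hle)

end HomTStructure

/-- The key case `n = 0` of statement 10. -/
lemma key_stmt10 {t : HomTStructure C} {H : Type w} [Category.{v} H] [Abelian H]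
    (d : HomologyData t H)
    (E : C) (hE₁ : t.le 0 E)
    (hE₂ : ∀ X : C, t.le 0 X → ∀ f : X ⟶ E⟦(1 : ℤ)⟧, f = 0)
    (hcog : ∀ A : H, (∀ g : A ⟶ (d.π 0).obj E, g = 0) → IsZero A)
    (X : C) : (∀ f : X ⟶ E, f = 0) ↔ IsZero ((d.π 0).obj X) := by
  haveI := d.ιFull
  haveI := d.ιFaithful
  have ιge : ∀ A' : H, t.ge 0 (d.ι.obj A') := fun A' =>
    ((d.essImage (d.ι.obj A')).1 ⟨A', ⟨Iso.refl _⟩⟩).1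
  have hY : t.le 0 (d.τ.obj X) := d.τ_le X
  obtain ⟨A, B, f, g, h, hA, hB, hT⟩ := t.trunc (d.τ.obj X)
  have hT' := inv_rot_of_distTriang _ hT
  -- maps from `B` and `B⟦-1⟧` to `E` vanish
  have zBE : ∀ w : B ⟶ E, w = 0 := fun w => by
    apply (shiftFunctor C (1 : ℤ)).map_injective
    rw [Functor.map_zero]
    exact hE₂ _ (t.le_shift' (-1) 1 0 (by omega) B hB) _
  have zB1E : ∀ w : B⟦(-1 : ℤ)⟧ ⟶ E, w = 0 := fun w => by
    apply (shiftFunctor C (1 : ℤ)).map_injective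
    rw [Functor.map_zero]
    exact hE₂ _ (t.le_mono 0 (-1) (by omega) _
      (t.le_shift' (-2) 1 (-1) (by omega) _
        (t.le_shift' (-1) (-1) (-2) (by omega) B hB))) _
  -- `A` lies in the heart
  have hA_le : t.le 0 A := by
    apply t.le_of_orth
    intro W hW u
    have hu : u ≫ f = 0 := t.hom_zero' 1 0 hW hY (by omega) (u ≫ f)
    obtain ⟨w, hw⟩ := Triangle.coyoneda_exact₂ _ hT' u hu
    rw [hw, t.hom_zero' 1 (-2) hW (t.le_shift' (-1) (-1) (-2) (by omega) B hB)
      (by omega) w]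
    exact zero_comp
  obtain ⟨A₀, ⟨eA⟩⟩ := (d.essImage A).2 ⟨hA, hA_le⟩
  -- precomposition with `f` is bijective on maps to `E`
  have bijE : Function.Bijective (fun u : d.τ.obj X ⟶ E => f ≫ u) := by
    constructor
    · intro u₁ u₂ hu
      have hu2 : f ≫ u₁ = f ≫ u₂ := hu
      have hu' : f ≫ (u₁ - u₂) = 0 := by
        rw [Preadditive.comp_sub, hu2, sub_self]
      obtain ⟨w, hw⟩ := Triangle.yoneda_exact₂ _ hT (u₁ - u₂) hu'
      rw [zBE w] at hw
      replace hw := hw.trans comp_zero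
      exact sub_eq_zero.1 hw
    · intro v
      obtain ⟨w, hw⟩ := Triangle.yoneda_exact₂ _ hT' v (zB1E _)
      exact ⟨w, hw.symm⟩
  -- postcomposition with `f` is bijective on maps from `C_{≥0}` objects
  have bijW : ∀ W : C, t.ge 0 W →
      Function.Bijective (fun v : W ⟶ A => v ≫ f) := by
    intro W hW
    constructor
    · intro v₁ v₂ hv
      have hv2 : v₁ ≫ f = v₂ ≫ f := hv
      have hv' : (v₁ - v₂) ≫ f = 0 := by
        rw [Preadditive.sub_comp, hv2, sub_self]
      obtain ⟨w, hw⟩ := Triangle.coyoneda_exact₂ _ hT' (v₁ - v₂) hv'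
      rw [t.hom_zero' 0 (-2) hW (t.le_shift' (-1) (-1) (-2) (by omega) B hB)
        (by omega) w] at hw
      replace hw := hw.trans zero_comp
      exact sub_eq_zero.1 hw
    · intro u
      obtain ⟨v, hv⟩ := Triangle.coyoneda_exact₂ _ hT u
        (t.hom_zero' 0 (-1) hW hB (by omega) _)
      exact ⟨v, hv.symm⟩
  -- assemble the chain of equivalences
  have iz : ∀ M : H, IsZero M ↔ ∀ A' : H, Subsingleton (A' ⟶ M) := fun M =>
    ⟨fun hz A' => ⟨fun a b => hz.eq_of_tgt a b⟩,
      fun hs => (IsZero.iff_id_eq_zero M).2 (@Subsingleton.elim _ (hs M) _ _)⟩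
  have h1 : (∀ f : X ⟶ E, f = 0) ↔ Subsingleton (X ⟶ E) := forall_zero_iff_subsingleton
  have h2 : Subsingleton (X ⟶ E) ↔ Subsingleton (d.τ.obj X ⟶ E) :=
    (Equiv.ofBijective _ (d.τ_adj X E hE₁)).subsingleton_congr.symm
  have h3 : Subsingleton (d.τ.obj X ⟶ E) ↔ Subsingleton (A ⟶ E) :=
    (Equiv.ofBijective _ bijE).subsingleton_congr
  have h4 : Subsingleton (A ⟶ E) ↔ Subsingleton (A₀ ⟶ (d.π 0).obj E) :=
    ((Iso.homCongr eA (Iso.refl E)).symm.trans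
      (Equiv.ofBijective _ (d.adj_le E hE₁ A₀))).subsingleton_congr
  have h5 : Subsingleton (A₀ ⟶ (d.π 0).obj E) ↔ IsZero A₀ :=
    ⟨fun hs => hcog A₀ (fun g => @Subsingleton.elim _ hs g 0),
      fun hz => ⟨fun a b => hz.eq_of_src a b⟩⟩
  have h6 : ∀ A' : H, (A' ⟶ A₀) ≃ (A' ⟶ (d.π 0).obj (d.τ.obj X)) := fun A' =>
    (((Functor.FullyFaithful.ofFullyFaithful d.ι).homEquiv.trans
      (Iso.homCongr (Iso.refl (d.ι.obj A')) eA)).trans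
        (Equiv.ofBijective _ (bijW _ (ιge A')))).trans
          (Equiv.ofBijective _ (d.adj_le (d.τ.obj X) hY A'))
  have h7 : IsZero A₀ ↔ IsZero ((d.π 0).obj (d.τ.obj X)) := by
    rw [iz A₀, iz]
    exact forall_congr' fun A' => (h6 A').subsingleton_congr
  haveI := d.π_η X
  have h8 : IsZero ((d.π 0).obj (d.τ.obj X)) ↔ IsZero ((d.π 0).obj X) :=
    (asIso ((d.π 0).map (d.η.app X))).isZero_iff.symm
  exact h1.trans (h2.trans (h3.trans (h4.trans (h5.trans (h7.trans h8)))))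

end Aux

/-- for a non-degenerate t-structure and a t-injective object `E` whose
image `π₀(E)` is an injective cogenerator of the heart, one has, for every object `X`
and every integer `n`: `Hom_T(X, Σⁿ E) = 0` iff `πₙ(X) ≅ 0`. -/
theorem stmt10 {C : Type u} [Category.{v} C] [Preadditive C] [HasZeroObject C]
    [HasShift C ℤ] [∀ n : ℤ, (shiftFunctor C n).Additive] [Pretriangulated C]
    (t : HomTStructure C) (H : Type w) [Category.{v} H] [Abelian H]
    (d : HomologyData t H)
    -- the t-structure is non-degenerate
    (hnd₁ : ∀ X : C, (∀ n : ℤ, t.ge n X) → IsZero X)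
    (hnd₂ : ∀ X : C, (∀ n : ℤ, t.le n X) → IsZero X)
    -- `E` is t-injective
    (E : C) (hE₁ : t.le 0 E)
    (hE₂ : ∀ X : C, t.le 0 X → ∀ f : X ⟶ E⟦(1 : ℤ)⟧, f = 0)
    -- `π₀(E)` is an injective cogenerator of the heart
    (hcog : ∀ A : H, (∀ g : A ⟶ (d.π 0).obj E, g = 0) → IsZero A) :
    ∀ (X : C) (n : ℤ), (∀ f : X ⟶ E⟦n⟧, f = 0) ↔ IsZero ((d.π n).obj X) := by
  intro X n
  have e : (X ⟶ E⟦n⟧) ≃ (X⟦(-n : ℤ)⟧ ⟶ E) :=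
    (Functor.FullyFaithful.ofFullyFaithful (shiftFunctor C (-n))).homEquiv.trans
      (Iso.homCongr (Iso.refl _) (shiftShiftNeg E n))
  have h1 : (∀ f : X ⟶ E⟦n⟧, f = 0) ↔ (∀ f : X⟦(-n : ℤ)⟧ ⟶ E, f = 0) := by
    rw [forall_zero_iff_subsingleton, forall_zero_iff_subsingleton]
    exact e.subsingleton_congr
  have h2 := key_stmt10 d E hE₁ hE₂ hcog (X⟦(-n : ℤ)⟧)
  have e2 : (d.π n).obj X ≅ (d.π 0).obj (X⟦(-n : ℤ)⟧) := (d.πShift n).app X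
  exact h1.trans (h2.trans e2.isZero_iff.symm)
end

section
/- Let T be a triangulated category with a non-degenerate t-structure (T_{≥0}, T_{≤0}) with heart H, and let E be a t-injective object such that π₀(E) is an injective cogenerator of H. Then T_{≥0} = {X : Hom_T(X, Σⁿ E) = 0 for all n < 0} and T_{≤0} = {X : Hom_T(X, Σⁿ E) = 0 for all n > 0}; i.e., E is a cosilting object determining the t-structure. -/
open CategoryTheory Limits Pretriangulated

universe u v w

variable (C : Type u) [Category.{v} C] [Preadditive C] [HasZeroObject C] [HasShift C ℤ]
  [∀ n : ℤ, (shiftFunctor C n).Additive] [Pretriangulated C]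

variable {C}

section AuxLemmas

variable {C : Type u} [Category.{v} C] [Preadditive C] [HasZeroObject C] [HasShift C ℤ]
  [∀ n : ℤ, (shiftFunctor C n).Additive] [Pretriangulated C] (t : HomTStructure C)

lemma aux_ge_unshift {n k : ℤ} {X : C} (h : t.ge n (X⟦k⟧)) : t.ge (n - k) X := by
  have h1 := t.ge_shift n (-k) _ h
  have h2 := t.ge_iso (n + -k) ((shiftFunctorCompIsoId C k (-k) (by ring)).app X) h1
  rwa [show n + -k = n - k by ring] at h2

lemma aux_le_unshift {n k : ℤ} {X : C} (h : t.le n (X⟦k⟧)) : t.le (n - k) X := by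
  have h1 := t.le_shift n (-k) _ h
  have h2 := t.le_iso (n + -k) ((shiftFunctorCompIsoId C k (-k) (by ring)).app X) h1
  rwa [show n + -k = n - k by ring] at h2

lemma aux_hom_zero {X Y : C} {a b : ℤ} (hab : b < a) (hX : t.ge a X) (hY : t.le b Y)
    (f : X ⟶ Y) : f = 0 := by
  have h1 : t.ge 0 (X⟦-a⟧) := by
    have := t.ge_shift a (-a) X hX; rwa [add_neg_cancel] at this
  have h2 : t.le (b - a) (Y⟦-a⟧) := by
    have := t.le_shift b (-a) Y hY; rwa [show b + -a = b - a by ring] at this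
  have h3 : t.le (-1) (Y⟦(-a : ℤ)⟧) := t.le_mono (-1) (b - a) (by omega) _ h2
  have h4 := t.hom_zero h1 h3 ((shiftFunctor C (-a)).map f)
  apply (shiftFunctor C (-a)).map_injective
  rw [h4, Functor.map_zero]

lemma aux_le_of_orth {Y : C} (h : ∀ W : C, t.ge 0 W → ∀ f : W ⟶ Y, f = 0) :
    t.le (-1) Y := by
  obtain ⟨A, B, u, v, w, hA, hB, hT⟩ := t.trunc Y
  have hu : u = 0 := h A hA u
  have hA0 : IsZero A := by
    rw [IsZero.iff_id_eq_zero]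
    obtain ⟨s, hs⟩ := Triangle.coyoneda_exact₂ _ (inv_rot_of_distTriang _ hT) (𝟙 A)
      (by simp [hu]; exact comp_zero)
    have hBs : t.le (-2) (B⟦(-1 : ℤ)⟧) := by
      have := t.le_shift (-1) (-1) B hB; rwa [show (-1 : ℤ) + -1 = -2 by ring] at this
    have hs0 : s = 0 := aux_hom_zero t (show (-2 : ℤ) < 0 by omega) hA hBs s
    rw [hs, hs0, zero_comp]; rfl
  have : IsIso (Triangle.mk u v w).mor₂ := (Triangle.isZero₁_iff_isIso₂ _ hT).1 hA0
  exact t.le_iso (-1) (asIso (Triangle.mk u v w).mor₂).symm hB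

lemma aux_ge_of_orth {W : C} (h : ∀ Z : C, t.le (-1) Z → ∀ f : W ⟶ Z, f = 0) :
    t.ge 0 W := by
  obtain ⟨A, B, u, v, w, hA, hB, hT⟩ := t.trunc W
  have hv : v = 0 := h B hB v
  have hB0 : IsZero B := by
    rw [IsZero.iff_id_eq_zero]
    obtain ⟨s, hs⟩ := Triangle.yoneda_exact₃ _ hT (𝟙 B) (by simp [hv]; exact zero_comp)
    have hAs : t.ge 1 (A⟦(1 : ℤ)⟧) := by
      have := t.ge_shift 0 1 A hA; rwa [zero_add] at this
    have hs0 : s = 0 := aux_hom_zero t (show (-1 : ℤ) < 1 by omega) hAs hB s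
    rw [hs, hs0, comp_zero]; rfl
  have : IsIso (Triangle.mk u v w).mor₁ := (Triangle.isZero₃_iff_isIso₁ _ hT).1 hB0
  exact t.ge_iso 0 (@asIso _ _ _ _ _ this) hA

lemma aux_le_of_orth' (n : ℤ) {Y : C}
    (h : ∀ W : C, t.ge (n + 1) W → ∀ f : W ⟶ Y, f = 0) : t.le n Y := by
  have key : t.le (-1) (Y⟦(-1 - n : ℤ)⟧) := by
    apply aux_le_of_orth t
    intro W hW f
    have hW' : t.ge (n + 1) (W⟦(n + 1 : ℤ)⟧) := by
      have := t.ge_shift 0 (n + 1) W hW; rwa [zero_add] at this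
    have hg := h _ hW'
      ((shiftFunctor C (n + 1)).map f ≫
        (shiftFunctorCompIsoId C (-1 - n) (n + 1) (by ring)).hom.app Y)
    apply (shiftFunctor C (n + 1)).map_injective
    rw [Functor.map_zero, ← cancel_mono
      ((shiftFunctorCompIsoId C (-1 - n) (n + 1) (by ring)).hom.app Y), zero_comp]
    exact hg
  have := aux_le_unshift t key
  rwa [show (-1 : ℤ) - (-1 - n) = n by ring] at this

lemma aux_ge_of_orth' (m : ℤ) {W : C}
    (h : ∀ Z : C, t.le (m - 1) Z → ∀ f : W ⟶ Z, f = 0) : t.ge m W := by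
  have key : t.ge 0 (W⟦(-m : ℤ)⟧) := by
    apply aux_ge_of_orth t
    intro Z hZ f
    have hZ' : t.le (m - 1) (Z⟦(m : ℤ)⟧) := by
      have := t.le_shift (-1) m Z hZ; rwa [show (-1 : ℤ) + m = m - 1 by ring] at this
    have e := (shiftFunctorCompIsoId C (-m) m (by ring)).app W
    have hg := h _ hZ' (e.inv ≫ (shiftFunctor C m).map f)
    apply (shiftFunctor C m).map_injective
    rw [Functor.map_zero, ← cancel_epi e.inv, comp_zero]
    exact hg
  have := aux_ge_unshift t key
  rwa [show (0 : ℤ) - -m = m by ring] at this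

end AuxLemmas

section AuxE

variable {C : Type u} [Category.{v} C] [Preadditive C] [HasZeroObject C] [HasShift C ℤ]
  [∀ n : ℤ, (shiftFunctor C n).Additive] [Pretriangulated C] (t : HomTStructure C)
  {H : Type w} [Category.{v} H] [Abelian H] {E : C}

lemma aux_homE₀ (hE₂ : ∀ X : C, t.le 0 X → ∀ f : X ⟶ E⟦(1 : ℤ)⟧, f = 0)
    {Y : C} (hY : t.le (-1) Y) (f : Y ⟶ E) : f = 0 := by
  have hY' : t.le 0 (Y⟦(1 : ℤ)⟧) := by
    have := t.le_shift (-1) 1 Y hY; rwa [show (-1 : ℤ) + 1 = 0 by ring] at this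
  have := hE₂ _ hY' ((shiftFunctor C (1 : ℤ)).map f)
  apply (shiftFunctor C (1 : ℤ)).map_injective
  rw [this, Functor.map_zero]

lemma aux_homE (hE₂ : ∀ X : C, t.le 0 X → ∀ f : X ⟶ E⟦(1 : ℤ)⟧, f = 0)
    {m : ℤ} {Y : C} (hY : t.le (m - 1) Y) (f : Y ⟶ E⟦m⟧) : f = 0 := by
  have hY' : t.le 0 (Y⟦(1 - m : ℤ)⟧) := by
    have := t.le_shift (m - 1) (1 - m) Y hY
    rwa [show m - 1 + (1 - m) = 0 by ring] at this
  have eE := (shiftFunctorAdd' C m (1 - m) 1 (by ring)).app E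
  have hg := hE₂ _ hY' ((shiftFunctor C (1 - m)).map f ≫ eE.inv)
  apply (shiftFunctor C (1 - m)).map_injective
  rw [Functor.map_zero, ← cancel_mono eE.inv, zero_comp]
  exact hg

lemma aux_homE_shift {m : ℤ} {Y : C} (h : ∀ f : Y ⟶ E⟦m⟧, f = 0)
    (k m' : ℤ) (hm : m' + -k = m) (f : Y⟦k⟧ ⟶ E⟦m'⟧) : f = 0 := by
  have eY := (shiftFunctorCompIsoId C k (-k) (by ring)).app Y
  have eE := (shiftFunctorAdd' C m' (-k) m hm).app E
  have hg := h (eY.inv ≫ (shiftFunctor C (-k)).map f ≫ eE.inv)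
  apply (shiftFunctor C (-k)).map_injective
  rw [Functor.map_zero, ← cancel_epi eY.inv, ← cancel_mono eE.inv]
  simpa using hg

lemma aux_homE_unshift {m : ℤ} {Z : C} (h : ∀ g : Z ⟶ E⟦m⟧, g = 0)
    (f : Z⟦(-m : ℤ)⟧ ⟶ E) : f = 0 := by
  have e := (shiftFunctorCompIsoId C (-m) m (by ring)).app Z
  have hg := h (e.inv ≫ (shiftFunctor C m).map f)
  apply (shiftFunctor C m).map_injective
  rw [Functor.map_zero, ← cancel_epi e.inv, comp_zero]
  exact hg

lemma aux_pi_zero (d : HomologyData t H) (hE₁ : t.le 0 E)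
    (hcog : ∀ A : H, (∀ g : A ⟶ (d.π 0).obj E, g = 0) → IsZero A)
    {X : C} (hX : t.ge 0 X) (hhom : ∀ f : X ⟶ E, f = 0) :
    IsZero ((d.π 0).obj X) := by
  haveI := d.πAdditive 0
  apply hcog
  intro g
  obtain ⟨f₁, hf₁⟩ := (d.adj_ge X hX ((d.π 0).obj E)).2 g
  obtain ⟨f₂, hf₂⟩ := (d.adj_le E hE₁ ((d.π 0).obj E)).2 (𝟙 _)
  have hf₂' : (d.π 0).map f₂ = (d.πHeart ((d.π 0).obj E)).hom := by
    rw [Iso.inv_comp_eq] at hf₂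
    simpa using hf₂
  have h0 : f₁ ≫ f₂ = 0 := hhom _
  calc g = (d.π 0).map f₁ ≫ (d.πHeart ((d.π 0).obj E)).hom := hf₁.symm
    _ = (d.π 0).map f₁ ≫ (d.π 0).map f₂ := by rw [hf₂']
    _ = (d.π 0).map (f₁ ≫ f₂) := ((d.π 0).map_comp _ _).symm
    _ = 0 := by rw [h0, Functor.map_zero]

lemma aux_heart_iszero (d : HomologyData t H) {A : C} (hA1 : t.ge 0 A)
    (hA2 : t.le 0 A) (hπ : IsZero ((d.π 0).obj A)) : IsZero A := by
  obtain ⟨A₀, ⟨e⟩⟩ := (d.essImage A).2 ⟨hA1, hA2⟩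
  have h0 : e.inv = (0 : A ⟶ d.ι.obj A₀) := (d.adj_ge A hA1 A₀).1 (hπ.eq_of_src _ _)
  rw [IsZero.iff_id_eq_zero, ← e.inv_hom_id, h0, zero_comp]

lemma aux_trunc_le {Z : C} (hZ : t.le 0 Z) :
    ∃ (A B : C) (u : A ⟶ Z) (v : Z ⟶ B) (w : B ⟶ A⟦(1 : ℤ)⟧),
      t.ge 0 A ∧ t.le 0 A ∧ t.le (-1) B ∧ Triangle.mk u v w ∈ distTriang C := by
  obtain ⟨A, B, u, v, w, hA, hB, hT⟩ := t.trunc Z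
  refine ⟨A, B, u, v, w, hA, ?_, hB, hT⟩
  apply aux_le_of_orth' t 0
  intro W hW f
  have hfu : f ≫ u = 0 := aux_hom_zero t (show (0 : ℤ) < 0 + 1 by omega) hW hZ (f ≫ u)
  obtain ⟨s, hs⟩ := Triangle.coyoneda_exact₂ _ (inv_rot_of_distTriang _ hT) f hfu
  have hBs : t.le (-2) (B⟦(-1 : ℤ)⟧) := by
    have := t.le_shift (-1) (-1) B hB; rwa [show (-1 : ℤ) + -1 = -2 by ring] at this
  have hs0 : s = 0 := aux_hom_zero t (show (-2 : ℤ) < 0 + 1 by omega) hW hBs s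
  rw [hs, hs0, zero_comp]; rfl

lemma aux_le_step (d : HomologyData t H) (hE₁ : t.le 0 E)
    (hE₂ : ∀ X : C, t.le 0 X → ∀ f : X ⟶ E⟦(1 : ℤ)⟧, f = 0)
    (hcog : ∀ A : H, (∀ g : A ⟶ (d.π 0).obj E, g = 0) → IsZero A)
    {Z : C} {m : ℤ} (hZ : t.le m Z) (hhom : ∀ f : Z ⟶ E⟦m⟧, f = 0) :
    t.le (m - 1) Z := by
  have hZ' : t.le 0 (Z⟦(-m : ℤ)⟧) := by
    have := t.le_shift m (-m) Z hZ; rwa [add_neg_cancel] at this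
  have hhom' : ∀ f : Z⟦(-m : ℤ)⟧ ⟶ E, f = 0 := aux_homE_unshift hhom
  have key : t.le (-1) (Z⟦(-m : ℤ)⟧) := by
    obtain ⟨A, B, u, v, w, hA, hAle, hB, hT⟩ := aux_trunc_le t hZ'
    have hhomA : ∀ f : A ⟶ E, f = 0 := by
      intro f
      have hBs : t.le (-1) (B⟦(-1 : ℤ)⟧) := by
        have := t.le_shift (-1) (-1) B hB
        exact t.le_mono (-1) (-1 + -1) (by omega) _ this
      have hw : (Triangle.mk u v w).invRotate.mor₁ ≫ f = 0 := aux_homE₀ t hE₂ hBs _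
      obtain ⟨g, hg⟩ := Triangle.yoneda_exact₂ _ (inv_rot_of_distTriang _ hT) f hw
      rw [hg, hhom' g]; exact comp_zero
    have hπA : IsZero ((d.π 0).obj A) := aux_pi_zero t d hE₁ hcog hA hhomA
    have hA0 : IsZero A := aux_heart_iszero t d hA hAle hπA
    have : IsIso (Triangle.mk u v w).mor₂ := (Triangle.isZero₁_iff_isIso₂ _ hT).1 hA0
    exact t.le_iso (-1) (asIso (Triangle.mk u v w).mor₂).symm hB
  have := aux_le_unshift t key
  rwa [show (-1 : ℤ) - -m = m - 1 by ring] at this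

lemma aux_ge_step (d : HomologyData t H) (hE₁ : t.le 0 E)
    (hE₂ : ∀ X : C, t.le 0 X → ∀ f : X ⟶ E⟦(1 : ℤ)⟧, f = 0)
    (hcog : ∀ A : H, (∀ g : A ⟶ (d.π 0).obj E, g = 0) → IsZero A)
    {W : C} {m : ℤ} (hW : t.ge m W) (hhom : ∀ f : W ⟶ E⟦m⟧, f = 0) :
    t.ge (m + 1) W := by
  have hW' : t.ge 0 (W⟦(-m : ℤ)⟧) := by
    have := t.ge_shift m (-m) W hW; rwa [add_neg_cancel] at this
  have hhom' : ∀ f : W⟦(-m : ℤ)⟧ ⟶ E, f = 0 := aux_homE_unshift hhom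
  have hπ : IsZero ((d.π 0).obj (W⟦(-m : ℤ)⟧)) := aux_pi_zero t d hE₁ hcog hW' hhom'
  have key : t.ge 1 (W⟦(-m : ℤ)⟧) := by
    apply aux_ge_of_orth' t 1
    intro Z hZ f
    have hZ0 : t.le 0 Z := by
      have : (1 : ℤ) - 1 = 0 := by ring
      rwa [this] at hZ
    obtain ⟨A, B, u, v, w, hA, hAle, hB, hT⟩ := aux_trunc_le t hZ0
    have hfv : f ≫ v = 0 := aux_hom_zero t (show (-1 : ℤ) < 0 by omega) hW' hB (f ≫ v)
    obtain ⟨f', hf'⟩ := Triangle.coyoneda_exact₂ _ hT f hfv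
    obtain ⟨A₀, ⟨e⟩⟩ := (d.essImage A).2 ⟨hA, hAle⟩
    have h0 : f' ≫ e.inv = (0 : W⟦(-m : ℤ)⟧ ⟶ d.ι.obj A₀) :=
      (d.adj_ge _ hW' A₀).1 (hπ.eq_of_src _ _)
    have hf0 : f' = 0 := by
      have hrw : f' = (f' ≫ e.inv) ≫ e.hom := by erw [Category.assoc, e.inv_hom_id, Category.comp_id]
      rw [hrw, h0, zero_comp]; rfl
    rw [hf', hf0, zero_comp]; rfl
  have := aux_ge_unshift t key
  rwa [show (1 : ℤ) - -m = m + 1 by ring] at this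

end AuxE

/-- for a non-degenerate t-structure and a t-injective object `E` with
`π₀(E)` an injective cogenerator of the heart, `E` is a cosilting object determining
the t-structure: `T_{≥0} = {X : Hom(X, Σⁿ E) = 0 for all n < 0}` and
`T_{≤0} = {X : Hom(X, Σⁿ E) = 0 for all n > 0}`. -/
theorem stmt11 {C : Type u} [Category.{v} C] [Preadditive C] [HasZeroObject C]
    [HasShift C ℤ] [∀ n : ℤ, (shiftFunctor C n).Additive] [Pretriangulated C]
    (t : HomTStructure C) (H : Type w) [Category.{v} H] [Abelian H]
    (d : HomologyData t H)
    (hnd₁ : ∀ X : C, (∀ n : ℤ, t.ge n X) → IsZero X)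
    (hnd₂ : ∀ X : C, (∀ n : ℤ, t.le n X) → IsZero X)
    (E : C) (hE₁ : t.le 0 E)
    (hE₂ : ∀ X : C, t.le 0 X → ∀ f : X ⟶ E⟦(1 : ℤ)⟧, f = 0)
    (hcog : ∀ A : H, (∀ g : A ⟶ (d.π 0).obj E, g = 0) → IsZero A) :
    ∀ X : C,
      (t.ge 0 X ↔ ∀ n : ℤ, n < 0 → ∀ f : X ⟶ E⟦n⟧, f = 0) ∧
      (t.le 0 X ↔ ∀ n : ℤ, 0 < n → ∀ f : X ⟶ E⟦n⟧, f = 0) := by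
  have hEn : ∀ n : ℤ, t.le n (E⟦n⟧) := fun n => by
    have := t.le_shift 0 n E hE₁; rwa [zero_add] at this
  intro X
  constructor
  · constructor
    · intro hX n hn f
      have hE' : t.le (-1) (E⟦n⟧) := t.le_mono (-1) n (by omega) _ (hEn n)
      exact aux_hom_zero t (show (-1 : ℤ) < 0 by omega) hX hE' f
    · intro h
      obtain ⟨A, B, u, v, w, hA, hB, hT⟩ := t.trunc X
      have hBhom : ∀ n : ℤ, n ≤ -1 → ∀ f : B ⟶ E⟦n⟧, f = 0 := by
        intro n hn f
        have h1 : (Triangle.mk u v w).rotate.mor₁ ≫ f = 0 := h n (by omega) _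
        obtain ⟨s, hs⟩ := Triangle.yoneda_exact₂ _ (rot_of_distTriang _ hT) f h1
        have hA1 : t.ge 1 (A⟦(1 : ℤ)⟧) := by
          have := t.ge_shift 0 1 A hA; rwa [zero_add] at this
        have hEn' : t.le (-1) (E⟦n⟧) := t.le_mono (-1) n (by omega) _ (hEn n)
        have hs0 : s = 0 := aux_hom_zero t (show (-1 : ℤ) < 1 by omega) hA1 hEn' s
        rw [hs, hs0, comp_zero]; rfl
      have key : ∀ k : ℕ, t.le (-1 - k) B := by
        intro k
        induction k with
        | zero => simpa using hB
        | succ k ih =>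
          have := aux_le_step t d hE₁ hE₂ hcog ih (hBhom (-1 - k) (by omega))
          rwa [show (-1 - (k : ℤ)) - 1 = -1 - ((k + 1 : ℕ) : ℤ) by push_cast; ring] at this
      have hBz : IsZero B := by
        apply hnd₂
        intro n
        rcases le_or_gt (-1) n with h' | h'
        · exact t.le_mono n (-1) (by omega) B hB
        · have := key ((-1 - n).toNat)
          rwa [show (-1 - (((-1 - n).toNat : ℤ))) = n by omega] at this
      have : IsIso (Triangle.mk u v w).mor₁ := (Triangle.isZero₃_iff_isIso₁ _ hT).1 hBz
      exact t.ge_iso 0 (@asIso _ _ _ _ _ this) hA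
  · constructor
    · intro hX n hn f
      exact aux_homE t hE₂ (t.le_mono (n - 1) 0 (by omega) X hX) f
    · intro h
      have hYhom : ∀ m : ℤ, 0 ≤ m → ∀ f : X⟦(-1 : ℤ)⟧ ⟶ E⟦m⟧, f = 0 := by
        intro m hm f
        exact aux_homE_shift (h (m + 1) (by omega)) (-1) m (by ring) f
      obtain ⟨A, B, u, v, w, hA, hB, hT⟩ := t.trunc (X⟦(-1 : ℤ)⟧)
      have hAhom : ∀ m : ℤ, 0 ≤ m → ∀ f : A ⟶ E⟦m⟧, f = 0 := by
        intro m hm f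
        have hBs : t.le (m - 1) (B⟦(-1 : ℤ)⟧) := by
          have := t.le_shift (-1) (-1) B hB
          exact t.le_mono (m - 1) (-1 + -1) (by omega) _ this
        have h1 : (Triangle.mk u v w).invRotate.mor₁ ≫ f = 0 := aux_homE t hE₂ hBs _
        obtain ⟨g, hg⟩ := Triangle.yoneda_exact₂ _ (inv_rot_of_distTriang _ hT) f h1
        rw [hg, hYhom m hm g]; exact comp_zero
      have key : ∀ k : ℕ, t.ge k A := by
        intro k
        induction k with
        | zero => simpa using hA
        | succ k ih =>
          have := aux_ge_step t d hE₁ hE₂ hcog ih (hAhom k (by omega))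
          rwa [show (k : ℤ) + 1 = ((k + 1 : ℕ) : ℤ) by push_cast; ring] at this
      have hAz : IsZero A := by
        apply hnd₁
        intro n
        rcases le_or_gt n 0 with h' | h'
        · exact t.ge_mono n 0 h' A hA
        · have := key n.toNat
          rwa [show ((n.toNat : ℤ)) = n by omega] at this
      have : IsIso (Triangle.mk u v w).mor₂ := (Triangle.isZero₁_iff_isIso₂ _ hT).1 hAz
      have hY : t.le (-1) (X⟦(-1 : ℤ)⟧) :=
        t.le_iso (-1) (asIso (Triangle.mk u v w).mor₂).symm hB
      have h1 := t.le_shift (-1) 1 _ hY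
      have h2 := t.le_iso _ ((shiftFunctorCompIsoId C (-1) 1 (by ring)).app X) h1
      rwa [show (-1 : ℤ) + 1 = 0 by ring] at h2
end

section
/- Let Q be a t-injective object with respect to a t-structure on a triangulated category T, i.e., Q ∈ T_{≤0} and Hom(X, ΣQ) = 0 for all X ∈ T_{≤0}. Then for every object X of T the canonical map Hom_T(X, Q) → Hom_H(π₀(X), π₀(Q)) induced by the homological functor π₀ is an isomorphism of abelian groups. -/
open CategoryTheory Limits Pretriangulated

universe u v w

variable (C : Type u) [Category.{v} C] [Preadditive C] [HasZeroObject C] [HasShift C ℤ]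
  [∀ n : ℤ, (shiftFunctor C n).Additive] [Pretriangulated C]

variable {C}

section Aux

lemma bij_precomp {D : Type*} [Category D] {X Y Z : D} (g : X ⟶ Y) [IsIso g] :
    Function.Bijective (fun f : Y ⟶ Z => g ≫ f) :=
  (Equiv.mk (fun f : Y ⟶ Z => g ≫ f) (fun f => inv g ≫ f)
    (fun f => by simp) (fun f => by simp)).bijective

lemma homZero (t : HomTStructure C) {U V : C} {n m : ℤ} (hU : t.ge n U) (hV : t.le m V)
    (hnm : m < n) (f : U ⟶ V) : f = 0 := by
  have h1 : t.ge 0 (U⟦-n⟧) := by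
    have h := t.ge_shift n (-n) U hU
    rwa [(by omega : n + -n = 0)] at h
  have h2 : t.le (-1) (V⟦-n⟧) :=
    t.le_mono (-1) (m + -n) (by omega) _ (t.le_shift m (-n) V hV)
  have h3 := t.hom_zero h1 h2 ((shiftFunctor C (-n)).map f)
  exact (shiftFunctor C (-n)).map_injective (by rw [h3, Functor.map_zero])

lemma homZeroQ (t : HomTStructure C) (Q : C)
    (hQ₂ : ∀ X : C, t.le 0 X → ∀ f : X ⟶ Q⟦(1 : ℤ)⟧, f = 0)
    {U : C} (hU : t.le (-1) U) (f : U ⟶ Q) : f = 0 := by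
  have h1 : t.le 0 (U⟦(1:ℤ)⟧) := by
    have h := t.le_shift (-1) 1 U hU
    rwa [(by omega : (-1:ℤ) + 1 = 0)] at h
  have h2 := hQ₂ _ h1 ((shiftFunctor C (1:ℤ)).map f)
  exact (shiftFunctor C (1:ℤ)).map_injective (by rw [h2, Functor.map_zero])

lemma bij_pre {T : Triangle C} (hT : T ∈ distTriang C) {Z : C}
    (h3 : ∀ g : T.obj₃ ⟶ Z, g = 0) (h3' : ∀ g : T.obj₃⟦(-1:ℤ)⟧ ⟶ Z, g = 0) :
    Function.Bijective (fun f : T.obj₂ ⟶ Z => T.mor₁ ≫ f) := by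
  constructor
  · intro f g hfg
    dsimp at hfg
    have h := sub_eq_zero.2 hfg
    rw [← Preadditive.comp_sub] at h
    obtain ⟨k, hk⟩ := Triangle.yoneda_exact₂ T hT (f - g) h
    rw [h3 k, comp_zero] at hk
    exact sub_eq_zero.1 hk
  · intro g
    obtain ⟨h, hh⟩ := Triangle.yoneda_exact₂ _ (inv_rot_of_distTriang T hT) g
      (h3' _)
    exact ⟨h, hh.symm⟩

lemma bij_post {T : Triangle C} (hT : T ∈ distTriang C) {W : C}
    (h3 : ∀ g : W ⟶ T.obj₃, g = 0) (h3' : ∀ g : W ⟶ T.obj₃⟦(-1:ℤ)⟧, g = 0) :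
    Function.Bijective (fun f : W ⟶ T.obj₁ => f ≫ T.mor₁) := by
  constructor
  · intro f g hfg
    dsimp at hfg
    have h := sub_eq_zero.2 hfg
    rw [← Preadditive.sub_comp] at h
    obtain ⟨k, hk⟩ := Triangle.coyoneda_exact₂ _ (inv_rot_of_distTriang T hT) (f - g) h
    rw [h3' k] at hk
    exact sub_eq_zero.1 (hk.trans zero_comp)
  · intro g
    obtain ⟨h, hh⟩ := Triangle.coyoneda_exact₂ T hT g (h3 _)
    exact ⟨h, hh.symm⟩

lemma le_of_ge1_homzero (t : HomTStructure C) {E : C}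
    (h : ∀ W : C, t.ge 1 W → ∀ g : W ⟶ E, g = 0) : t.le 0 E := by
  obtain ⟨A', B', a', b', c', hA', hB', hT'⟩ := t.trunc (E⟦(-1:ℤ)⟧)
  have eIso : ((E⟦(-1:ℤ)⟧)⟦(1:ℤ)⟧ : C) ≅ E :=
    (shiftFunctorCompIsoId C (-1:ℤ) (1:ℤ) (by omega)).app E
  have hge1 : t.ge 1 (A'⟦(1:ℤ)⟧) := by
    have hh := t.ge_shift 0 1 A' hA'
    rwa [(by omega : (0:ℤ) + 1 = 1)] at hh
  have ha'1 : (shiftFunctor C (1:ℤ)).map a' = 0 := by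
    have h0 : (shiftFunctor C (1:ℤ)).map a' ≫ eIso.hom = 0 := h _ hge1 _
    have : (shiftFunctor C (1:ℤ)).map a'
        = ((shiftFunctor C (1:ℤ)).map a' ≫ eIso.hom) ≫ eIso.inv := by simp
    rw [this, h0, zero_comp]
  obtain ⟨s, hs⟩ := Triangle.coyoneda_exact₃ (Triangle.mk a' b' c').rotate
    (rot_of_distTriang _ hT') (𝟙 (A'⟦(1:ℤ)⟧)) (by
      dsimp [Triangle.rotate]
      show 𝟙 _ ≫ (-(shiftFunctor C (1:ℤ)).map a') = 0
      rw [ha'1, neg_zero, comp_zero])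
  have hs0 : s = 0 := homZero t (t.ge_mono 0 1 (by omega) _ hge1) hB' (by omega) s
  have hid : 𝟙 (A'⟦(1:ℤ)⟧) = 0 := by rw [hs, hs0]; exact zero_comp
  have hidA : 𝟙 A' = 0 := (shiftFunctor C (1:ℤ)).map_injective
    (by rw [CategoryTheory.Functor.map_id, CategoryTheory.Functor.map_zero]; exact hid)
  have hc'0 : c' = 0 := by
    have hx := Category.comp_id c'
    rw [hid, comp_zero] at hx
    exact hx.symm
  have ha'0 : a' = 0 := by
    have hx := Category.id_comp a'
    rw [hidA, zero_comp] at hx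
    exact hx.symm
  obtain ⟨g2aux, hg2aux⟩ := Triangle.coyoneda_exact₃ (Triangle.mk a' b' c') hT' (𝟙 B')
    (by show 𝟙 B' ≫ c' = 0; rw [hc'0, comp_zero])
  let g₂ : B' ⟶ E⟦(-1:ℤ)⟧ := g2aux
  have hg₂ : 𝟙 B' = g₂ ≫ b' := hg2aux
  have hbg : b' ≫ g₂ = 𝟙 (E⟦(-1:ℤ)⟧) := by
    obtain ⟨h₂, hh₂⟩ := Triangle.coyoneda_exact₂ (Triangle.mk a' b' c') hT'
      (show ((E⟦(-1:ℤ)⟧ : C) ⟶ (Triangle.mk a' b' c').obj₂) from b' ≫ g₂ - 𝟙 (E⟦(-1:ℤ)⟧)) (by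
        show (b' ≫ g₂ - 𝟙 (E⟦(-1:ℤ)⟧)) ≫ b' = 0
        rw [Preadditive.sub_comp, Category.assoc, ← hg₂, Category.comp_id,
          Category.id_comp, sub_self])
    have hh₂' : b' ≫ g₂ - 𝟙 (E⟦(-1:ℤ)⟧) = h₂ ≫ a' := hh₂
    have hz : ∀ x : E⟦(-1:ℤ)⟧ ⟶ A', x ≫ a' = 0 := fun x => by rw [ha'0, comp_zero]
    exact sub_eq_zero.1 (hh₂'.trans (hz h₂))
  haveI : IsIso b' := ⟨⟨g₂, hbg, hg₂.symm⟩⟩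
  have hle : t.le (-1) (E⟦(-1:ℤ)⟧) := t.le_iso (-1) (asIso b').symm hB'
  have h2 : t.le 0 ((E⟦(-1:ℤ)⟧)⟦(1:ℤ)⟧) := by
    have hh := t.le_shift (-1) 1 _ hle
    rwa [(by omega : (-1:ℤ) + 1 = 0)] at hh
  exact t.le_iso 0 eIso h2

lemma le_ext (t : HomTStructure C) {T : Triangle C} (hT : T ∈ distTriang C)
    (h1 : t.le 0 T.obj₁) (h3 : t.le 0 T.obj₃) : t.le 0 T.obj₂ := by
  apply le_of_ge1_homzero t
  intro W hW g
  have hg2 : g ≫ T.mor₂ = 0 := homZero t hW h3 (by omega) _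
  obtain ⟨k, hk⟩ := Triangle.coyoneda_exact₂ T hT g hg2
  rw [hk, homZero t hW h1 (by omega) k, zero_comp]

end Aux

/-- if `Q` is t-injective (`Q ∈ T_{≤0}` and `Hom(X, ΣQ) = 0` for all
`X ∈ T_{≤0}`), then for every `X` the canonical map
`Hom_T(X, Q) → Hom_H(π₀ X, π₀ Q)`, `f ↦ π₀(f)`, is an isomorphism of abelian groups
(it is additive and bijective). -/
theorem stmt12 {C : Type u} [Category.{v} C] [Preadditive C] [HasZeroObject C]
    [HasShift C ℤ] [∀ n : ℤ, (shiftFunctor C n).Additive] [Pretriangulated C]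
    (t : HomTStructure C) (H : Type w) [Category.{v} H] [Abelian H]
    (d : HomologyData t H)
    (Q : C) (hQ₁ : t.le 0 Q)
    (hQ₂ : ∀ X : C, t.le 0 X → ∀ f : X ⟶ Q⟦(1 : ℤ)⟧, f = 0) (X : C) :
    (∀ f g : X ⟶ Q, (d.π 0).map (f + g) = (d.π 0).map f + (d.π 0).map g) ∧
    Function.Bijective (fun f : X ⟶ Q => (d.π 0).map f) := by
  constructor
  · intro f g
    letI := d.πAdditive 0
    exact (d.π 0).map_add
  · obtain ⟨A, B, a, b, cc, hA, hB, hT⟩ := t.trunc (d.τ.obj X)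
    have hBm2 : t.le (-1) (B⟦(-1:ℤ)⟧) :=
      t.le_mono (-1) (-1 + -1) (by omega) _ (t.le_shift (-1) (-1) B hB)
    have hτle : t.le 0 (d.τ.obj X) := d.τ_le X
    have hAle : t.le 0 A := by
      have hT2 := inv_rot_of_distTriang (Triangle.mk a b cc) hT
      exact le_ext t hT2 (t.le_mono 0 (-1) (by omega) _ hBm2) hτle
    obtain ⟨HA, ⟨e⟩⟩ := (d.essImage A).2 ⟨hA, hAle⟩
    have bij1 := d.τ_adj X Q hQ₁
    have bij2 : Function.Bijective (fun f : d.τ.obj X ⟶ Q => a ≫ f) :=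
      bij_pre hT (fun g => homZeroQ t Q hQ₂ hB g) (fun g => homZeroQ t Q hQ₂ hBm2 g)
    have bijA : Function.Bijective (fun h : A ⟶ Q => (d.π 0).map h) := by
      have b1 : Function.Bijective (fun h : A ⟶ Q => e.hom ≫ h) := bij_precomp e.hom
      have b2 := d.adj_le Q hQ₁ HA
      have b3 : Function.Bijective (fun φ : HA ⟶ (d.π 0).obj Q =>
          ((d.π 0).map e.inv ≫ (d.πHeart HA).hom) ≫ φ) := bij_precomp _
      have hcomp : (fun h : A ⟶ Q => (d.π 0).map h) =
          (fun φ : HA ⟶ (d.π 0).obj Q => ((d.π 0).map e.inv ≫ (d.πHeart HA).hom) ≫ φ) ∘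
          (fun h' : d.ι.obj HA ⟶ Q => (d.πHeart HA).inv ≫ (d.π 0).map h') ∘
          (fun h : A ⟶ Q => e.hom ≫ h) := by
        funext h
        dsimp
        rw [Functor.map_comp]
        rw [Category.assoc, Iso.hom_inv_id_assoc, ← Functor.map_comp_assoc,
          Iso.inv_hom_id, CategoryTheory.Functor.map_id, Category.id_comp]
      rw [hcomp]
      exact b3.comp (b2.comp b1)
    have keybij : ∀ M : H, Function.Bijective
        (fun φ : M ⟶ (d.π 0).obj A => φ ≫ (d.π 0).map a) := by
      intro M
      have hιM := (d.essImage (d.ι.obj M)).1 ⟨M, ⟨Iso.refl _⟩⟩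
      have hpost : Function.Bijective (fun g : d.ι.obj M ⟶ A => g ≫ a) :=
        bij_post hT (fun g => t.hom_zero hιM.1 hB g)
          (fun g => t.hom_zero hιM.1 hBm2 g)
      have h1 := d.adj_le A hAle M
      have h2 := d.adj_le (d.τ.obj X) hτle M
      have hsq : (fun φ : M ⟶ (d.π 0).obj A => φ ≫ (d.π 0).map a) ∘
          (fun g : d.ι.obj M ⟶ A => (d.πHeart M).inv ≫ (d.π 0).map g) =
          (fun g : d.ι.obj M ⟶ d.τ.obj X => (d.πHeart M).inv ≫ (d.π 0).map g) ∘
          (fun g : d.ι.obj M ⟶ A => g ≫ a) := by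
        funext g
        dsimp
        rw [Functor.map_comp, Category.assoc]
      have hb := h2.comp hpost
      rw [← hsq] at hb
      exact (Function.Bijective.of_comp_iff _ h1).1 hb
    haveI πa_iso : IsIso ((d.π 0).map a) := by
      obtain ⟨s, hs⟩ := (keybij ((d.π 0).obj (d.τ.obj X))).2 (𝟙 _)
      dsimp at hs
      refine ⟨s, ?_, hs⟩
      apply (keybij ((d.π 0).obj A)).1
      dsimp
      rw [Category.assoc, hs, Category.comp_id, Category.id_comp]
    have bijτ : Function.Bijective (fun g : d.τ.obj X ⟶ Q => (d.π 0).map g) := by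
      have hsq : (fun h : A ⟶ Q => (d.π 0).map h) ∘ (fun g : d.τ.obj X ⟶ Q => a ≫ g)
          = (fun ξ : (d.π 0).obj (d.τ.obj X) ⟶ (d.π 0).obj Q => (d.π 0).map a ≫ ξ) ∘
            (fun g : d.τ.obj X ⟶ Q => (d.π 0).map g) := by
        funext g
        dsimp
        rw [Functor.map_comp]
      have hb := bijA.comp bij2
      rw [hsq] at hb
      exact (Function.Bijective.of_comp_iff' (bij_precomp ((d.π 0).map a)) _).1 hb
    have hsq2 : (fun f : X ⟶ Q => (d.π 0).map f) ∘
        (fun g : d.τ.obj X ⟶ Q => d.η.app X ≫ g)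
        = (fun ξ : (d.π 0).obj (d.τ.obj X) ⟶ (d.π 0).obj Q => (d.π 0).map (d.η.app X) ≫ ξ) ∘
          (fun g : d.τ.obj X ⟶ Q => (d.π 0).map g) := by
      funext g
      dsimp
      rw [Functor.map_comp]
    haveI := d.π_η X
    have hb := (bij_precomp ((d.π 0).map (d.η.app X))).comp bijτ
    rw [← hsq2] at hb
    exact (Function.Bijective.of_comp_iff _ bij1).1 hb
end
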